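/- arXiv:math/0506073 — 6 statements merged into one kernel-verified Lean document; each statement's English description precedes it below -/
import Mathlib

section
/- If A = B + C where B is row bounded by L (each row of B has ℓ²-norm at most L) and C is column bounded by M, then every matrix S with |s_{ij}| ≤ a_{ij} has Schur multiplier norm at most L + M. -/
open scoped ENNReal ComplexOrder

set_option maxHeartbeats 1000000
set_option synthInstance.maxHeartbeats 1000000

noncomputable def opNorm2 {m : Type*} [Fintype m] [DecidableEq m] (M : Matrix m m ℂ) : ℝ :=
  ‖Matrix.toEuclideanCLM (𝕜 := ℂ) M‖

noncomputable def schurNorm {m : Type*} [Fintype m] [DecidableEq m] (M : Matrix m m ℂ) : ℝ :=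
  ⨆ X : {X : Matrix m m ℂ // opNorm2 X ≤ 1}, opNorm2 (M.hadamard X.1)

noncomputable def schurNormENN (A : ℕ → ℕ → ℂ) : ℝ≥0∞ :=
  ⨆ n : ℕ, ENNReal.ofReal (schurNorm (Matrix.of fun i j : Fin n => A i j))

noncomputable def schurBound (P : Set (ℕ × ℕ)) : ℝ≥0∞ :=
  ⨆ S : {S : ℕ → ℕ → ℂ //
      (∀ i j, ‖S i j‖ ≤ 1) ∧ ∀ i j, (i, j) ∉ P → S i j = 0},
    schurNormENN S.1

noncomputable def matAbs {m : Type*} [Fintype m] [DecidableEq m] (T : Matrix m m ℂ) :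
    Matrix m m ℂ :=
  (Matrix.posSemidef_conjTranspose_mul_self T).1.eigenvectorUnitary.1 *
    Matrix.diagonal ((↑) ∘ (√·) ∘ (Matrix.posSemidef_conjTranspose_mul_self T).1.eigenvalues) *
    (star (Matrix.posSemidef_conjTranspose_mul_self T).1.eigenvectorUnitary : Matrix m m ℂ)

open Matrix in
lemma opNorm2_nonneg {m : Type*} [Fintype m] [DecidableEq m] (A : Matrix m m ℂ) :
    0 ≤ opNorm2 A := norm_nonneg _

lemma opNorm2_conjTranspose {m : Type*} [Fintype m] [DecidableEq m] (A : Matrix m m ℂ) :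
    opNorm2 A.conjTranspose = opNorm2 A := by
  unfold opNorm2
  rw [show A.conjTranspose = star A from rfl, map_star, ContinuousLinearMap.star_eq_adjoint]
  exact ContinuousLinearMap.adjoint.norm_map _

lemma toEuclideanCLM_apply {m : Type*} [Fintype m] [DecidableEq m] (A : Matrix m m ℂ)
    (x : EuclideanSpace ℂ m) (i : m) :
    (Matrix.toEuclideanCLM (𝕜 := ℂ) A x) i = ∑ j, A i j * x j := rfl

lemma colsum_le {m : Type*} [Fintype m] [DecidableEq m] (X : Matrix m m ℂ) (j : m) :
    ∑ i, ‖X i j‖ ^ 2 ≤ opNorm2 X ^ 2 := by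
  have h := (Matrix.toEuclideanCLM (𝕜 := ℂ) X).le_opNorm (EuclideanSpace.single j (1:ℂ))
  rw [EuclideanSpace.norm_single, norm_one, mul_one] at h
  have heq : ‖Matrix.toEuclideanCLM (𝕜 := ℂ) X (EuclideanSpace.single j (1:ℂ))‖ ^ 2
      = ∑ i, ‖X i j‖ ^ 2 := by
    rw [EuclideanSpace.norm_eq, Real.sq_sqrt (by positivity)]
    refine Finset.sum_congr rfl fun i _ => ?_
    congr 2
    rw [toEuclideanCLM_apply]
    simp [EuclideanSpace.single_apply]
  rw [← heq]
  exact pow_le_pow_left₀ (norm_nonneg _) h 2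

lemma row_bound {m : Type*} [Fintype m] [DecidableEq m] (T X : Matrix m m ℂ) (L : ℝ)
    (hL : 0 ≤ L) (hT : ∀ i, ∑ j, ‖T i j‖ ^ 2 ≤ L ^ 2) :
    opNorm2 (T.hadamard X) ≤ L * opNorm2 X := by
  have hXnn : 0 ≤ opNorm2 X := opNorm2_nonneg X
  refine ContinuousLinearMap.opNorm_le_bound _ (by positivity) fun x => ?_
  have key : ‖Matrix.toEuclideanCLM (𝕜 := ℂ) (T.hadamard X) x‖ ^ 2
      ≤ (L * opNorm2 X * ‖x‖) ^ 2 := by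
    rw [EuclideanSpace.norm_eq, Real.sq_sqrt (by positivity)]
    have step1 : ∀ i, ‖(Matrix.toEuclideanCLM (𝕜 := ℂ) (T.hadamard X) x) i‖ ^ 2
        ≤ (∑ j, ‖T i j‖ ^ 2) * (∑ j, ‖X i j * x j‖ ^ 2) := by
      intro i
      set a : EuclideanSpace ℂ m := (WithLp.equiv 2 (m → ℂ)).symm fun j => star (T i j) with ha
      set b : EuclideanSpace ℂ m := (WithLp.equiv 2 (m → ℂ)).symm fun j => X i j * x j with hb
      have hinner : (inner ℂ a b : ℂ) = (Matrix.toEuclideanCLM (𝕜 := ℂ) (T.hadamard X) x) i := by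
        rw [toEuclideanCLM_apply, PiLp.inner_apply]
        refine Finset.sum_congr rfl fun j _ => ?_
        simp [ha, hb, RCLike.inner_apply, Matrix.hadamard_apply, mul_assoc, mul_comm, mul_left_comm]
      have hcs := norm_inner_le_norm (𝕜 := ℂ) a b
      have hna : ‖a‖ ^ 2 = ∑ j, ‖T i j‖ ^ 2 := by
        rw [EuclideanSpace.norm_eq, Real.sq_sqrt (by positivity)]
        simp [ha]
      have hnb : ‖b‖ ^ 2 = ∑ j, ‖X i j * x j‖ ^ 2 := by
        rw [EuclideanSpace.norm_eq, Real.sq_sqrt (by positivity)]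
        simp [hb]
      calc ‖(Matrix.toEuclideanCLM (𝕜 := ℂ) (T.hadamard X) x) i‖ ^ 2
          = ‖(inner ℂ a b : ℂ)‖ ^ 2 := by rw [hinner]
        _ ≤ (‖a‖ * ‖b‖) ^ 2 := pow_le_pow_left₀ (norm_nonneg _) hcs 2
        _ = (∑ j, ‖T i j‖ ^ 2) * (∑ j, ‖X i j * x j‖ ^ 2) := by rw [mul_pow, hna, hnb]
    calc ∑ i, ‖(Matrix.toEuclideanCLM (𝕜 := ℂ) (T.hadamard X) x) i‖ ^ 2
        ≤ ∑ i, (∑ j, ‖T i j‖ ^ 2) * (∑ j, ‖X i j * x j‖ ^ 2) :=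
          Finset.sum_le_sum fun i _ => step1 i
      _ ≤ ∑ i, L ^ 2 * (∑ j, ‖X i j * x j‖ ^ 2) :=
          Finset.sum_le_sum fun i _ =>
            mul_le_mul_of_nonneg_right (hT i) (by positivity)
      _ = L ^ 2 * ∑ j, ‖x j‖ ^ 2 * ∑ i, ‖X i j‖ ^ 2 := by
          rw [← Finset.mul_sum, Finset.sum_comm]
          congr 1
          refine Finset.sum_congr rfl fun j _ => ?_
          rw [Finset.mul_sum]
          refine Finset.sum_congr rfl fun i _ => ?_
          rw [norm_mul, mul_pow]; ring
      _ ≤ L ^ 2 * ∑ j, ‖x j‖ ^ 2 * opNorm2 X ^ 2 := by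
          refine mul_le_mul_of_nonneg_left (Finset.sum_le_sum fun j _ => ?_) (by positivity)
          exact mul_le_mul_of_nonneg_left (colsum_le X j) (by positivity)
      _ = (L * opNorm2 X * ‖x‖) ^ 2 := by
          rw [← Finset.sum_mul]
          have : ∑ j, ‖x j‖ ^ 2 = ‖x‖ ^ 2 := by
            rw [EuclideanSpace.norm_eq, Real.sq_sqrt (by positivity)]
          rw [this]; ring
  have h1 := Real.sqrt_le_sqrt key
  rwa [Real.sqrt_sq (norm_nonneg _), Real.sqrt_sq (by positivity)] at h1

lemma col_bound {m : Type*} [Fintype m] [DecidableEq m] (T X : Matrix m m ℂ) (M : ℝ)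
    (hM : 0 ≤ M) (hT : ∀ j, ∑ i, ‖T i j‖ ^ 2 ≤ M ^ 2) :
    opNorm2 (T.hadamard X) ≤ M * opNorm2 X := by
  have hmat : (T.hadamard X).conjTranspose = (T.conjTranspose).hadamard (X.conjTranspose) := by
    ext i j
    simp [Matrix.hadamard_apply, Matrix.conjTranspose_apply, map_mul]
  have h1 : opNorm2 (T.hadamard X) = opNorm2 ((T.conjTranspose).hadamard (X.conjTranspose)) := by
    rw [← hmat, opNorm2_conjTranspose]
  rw [h1, ← opNorm2_conjTranspose X]
  refine row_bound T.conjTranspose X.conjTranspose M hM fun i => ?_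
  calc ∑ j, ‖T.conjTranspose i j‖ ^ 2 = ∑ j, ‖T j i‖ ^ 2 := by
        refine Finset.sum_congr rfl fun j _ => by
          rw [Matrix.conjTranspose_apply, norm_star]
    _ ≤ M ^ 2 := hT i

theorem stmt_2 (A B C : ℕ → ℕ → ℝ) (L M : ℝ) (hL : 0 ≤ L) (hM : 0 ≤ M)
    (hB : ∀ i j, 0 ≤ B i j) (hC : ∀ i j, 0 ≤ C i j)
    (hsum : ∀ i j, A i j = B i j + C i j)
    (hrow : ∀ i, ∑' j, ENNReal.ofReal ((B i j) ^ 2) ≤ ENNReal.ofReal (L ^ 2))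
    (hcol : ∀ j, ∑' i, ENNReal.ofReal ((C i j) ^ 2) ≤ ENNReal.ofReal (M ^ 2))
    (S : ℕ → ℕ → ℂ) (hS : ∀ i j, ‖S i j‖ ≤ A i j) :
    schurNormENN S ≤ ENNReal.ofReal (L + M) := by
  have hA : ∀ i j, 0 ≤ A i j := fun i j => (norm_nonneg _).trans (hS i j)
  refine iSup_le fun n => ?_
  rw [ENNReal.ofReal_le_ofReal_iff (by positivity)]
  refine Real.iSup_le ?_ (by positivity)
  rintro ⟨X, hX⟩
  set T : Matrix (Fin n) (Fin n) ℂ :=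
    Matrix.of fun i j : Fin n =>
      if A i j = 0 then 0 else S i j * ((B i j / A i j : ℝ) : ℂ) with hTdef
  set U : Matrix (Fin n) (Fin n) ℂ :=
    Matrix.of fun i j : Fin n =>
      if A i j = 0 then 0 else S i j * ((C i j / A i j : ℝ) : ℂ) with hUdef
  have hzero : ∀ i j, A i j = 0 → S i j = 0 := by
    intro i j h
    have h1 := (hS i j).trans_eq h
    exact norm_eq_zero.mp (le_antisymm h1 (norm_nonneg _))
  have hTU : (Matrix.of fun i j : Fin n => S i j) = T + U := by
    ext i j
    simp only [Matrix.of_apply, Matrix.add_apply, hTdef, hUdef]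
    by_cases h : A (i:ℕ) (j:ℕ) = 0
    · simp [h, hzero i j h]
    · rw [if_neg h, if_neg h, ← mul_add, ← Complex.ofReal_add, ← add_div,
        ← hsum, div_self h, Complex.ofReal_one, mul_one]
  have hTle : ∀ i j : Fin n, ‖T i j‖ ≤ B i j := by
    intro i j
    simp only [hTdef, Matrix.of_apply]
    by_cases h : A (i:ℕ) (j:ℕ) = 0
    · simp [h, hB]
    · have hApos : 0 < A (i:ℕ) (j:ℕ) := lt_of_le_of_ne (hA _ _) (Ne.symm h)
      have hdiv : 0 ≤ B (i:ℕ) (j:ℕ) / A (i:ℕ) (j:ℕ) := div_nonneg (hB _ _) (hA _ _)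
      rw [if_neg h, norm_mul, Complex.norm_real,
        Real.norm_of_nonneg hdiv]
      calc ‖S (i:ℕ) (j:ℕ)‖ * (B i j / A i j) ≤ A i j * (B i j / A i j) := by
            refine mul_le_mul_of_nonneg_right ?_ hdiv
            exact (hS i j)
        _ = B i j := by field_simp
  have hUle : ∀ i j : Fin n, ‖U i j‖ ≤ C i j := by
    intro i j
    simp only [hUdef, Matrix.of_apply]
    by_cases h : A (i:ℕ) (j:ℕ) = 0
    · simp [h, hC]
    · have hApos : 0 < A (i:ℕ) (j:ℕ) := lt_of_le_of_ne (hA _ _) (Ne.symm h)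
      have hdiv : 0 ≤ C (i:ℕ) (j:ℕ) / A (i:ℕ) (j:ℕ) := div_nonneg (hC _ _) (hA _ _)
      rw [if_neg h, norm_mul, Complex.norm_real,
        Real.norm_of_nonneg hdiv]
      calc ‖S (i:ℕ) (j:ℕ)‖ * (C i j / A i j) ≤ A i j * (C i j / A i j) := by
            refine mul_le_mul_of_nonneg_right ?_ hdiv
            exact (hS i j)
        _ = C i j := by field_simp
  have hrowT : ∀ i : Fin n, ∑ j, ‖T i j‖ ^ 2 ≤ L ^ 2 := by
    intro i
    have h1 : ∑ j : Fin n, ‖T i j‖ ^ 2 ≤ ∑ j : Fin n, (B i j) ^ 2 :=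
      Finset.sum_le_sum fun j _ => pow_le_pow_left₀ (norm_nonneg _) (hTle i j) 2
    refine h1.trans ?_
    have h2 : ENNReal.ofReal (∑ j : Fin n, (B (i:ℕ) (j:ℕ)) ^ 2) ≤ ENNReal.ofReal (L ^ 2) := by
      rw [ENNReal.ofReal_sum_of_nonneg (fun j _ => by positivity)]
      refine le_trans ?_ (hrow i)
      rw [Fin.sum_univ_eq_sum_range (fun j => ENNReal.ofReal ((B (i:ℕ) j) ^ 2)) n]
      exact ENNReal.sum_le_tsum _
    exact (ENNReal.ofReal_le_ofReal_iff (by positivity)).mp h2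
  have hcolU : ∀ j : Fin n, ∑ i, ‖U i j‖ ^ 2 ≤ M ^ 2 := by
    intro j
    have h1 : ∑ i : Fin n, ‖U i j‖ ^ 2 ≤ ∑ i : Fin n, (C i j) ^ 2 :=
      Finset.sum_le_sum fun i _ => pow_le_pow_left₀ (norm_nonneg _) (hUle i j) 2
    refine h1.trans ?_
    have h2 : ENNReal.ofReal (∑ i : Fin n, (C (i:ℕ) (j:ℕ)) ^ 2) ≤ ENNReal.ofReal (M ^ 2) := by
      rw [ENNReal.ofReal_sum_of_nonneg (fun i _ => by positivity)]
      refine le_trans ?_ (hcol j)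
      rw [Fin.sum_univ_eq_sum_range (fun i => ENNReal.ofReal ((C i (j:ℕ)) ^ 2)) n]
      exact ENNReal.sum_le_tsum _
    exact (ENNReal.ofReal_le_ofReal_iff (by positivity)).mp h2
  have hsplit : opNorm2 ((Matrix.of fun i j : Fin n => S i j).hadamard X)
      ≤ opNorm2 (T.hadamard X) + opNorm2 (U.hadamard X) := by
    rw [hTU]
    have : (T + U).hadamard X = T.hadamard X + U.hadamard X := by
      ext i j
      simp [Matrix.hadamard_apply, add_mul]
    rw [this]
    unfold opNorm2
    rw [map_add]
    exact norm_add_le _ _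
  calc opNorm2 ((Matrix.of fun i j : Fin n => S i j).hadamard X)
      ≤ opNorm2 (T.hadamard X) + opNorm2 (U.hadamard X) := hsplit
    _ ≤ L * opNorm2 X + M * opNorm2 X :=
        add_le_add (row_bound T X L hL hrowT) (col_bound U X M hM hcolU)
    _ ≤ L * 1 + M * 1 :=
        add_le_add (mul_le_mul_of_nonneg_left hX hL) (mul_le_mul_of_nonneg_left hX hM)
    _ = L + M := by ring
end

section
/- A pattern P ⊆ ℕ×ℕ is the union of a set with at most m entries in each row and a set with at most n entries in each column if and only if for every pair of finite subsets R, C ⊆ ℕ one has |P ∩ (R × C)| ≤ m|R| + n|C|. -/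
open scoped ENNReal ComplexOrder

theorem aux_encard_le_of_injOn {α β : Type*} [Fintype β] {s : Set α} (f : α → β)
    (hf : Set.InjOn f s) : s.encard ≤ Fintype.card β := by
  calc s.encard ≤ (Set.univ : Set β).encard :=
        Set.encard_le_encard_of_injOn (fun _ _ => Set.mem_univ _) hf
    _ = Fintype.card β := by rw [Set.encard_univ, ENat.card_eq_coe_fintype_card]

theorem aux_row_bound {m : ℕ} {Q : Set (ℕ × ℕ)} (hQ : ∀ i, {j | (i, j) ∈ Q}.encard ≤ m)
    (Rs Cs : Finset ℕ) [DecidablePred (· ∈ Q)] :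
    ((Rs ×ˢ Cs).filter (· ∈ Q)).card ≤ m * Rs.card := by
  classical
  set F := (Rs ×ˢ Cs).filter (· ∈ Q) with hF
  have hmem : ∀ x ∈ F, x.1 ∈ Rs := by
    intro x hx
    simp only [hF, Finset.mem_filter, Finset.mem_product] at hx
    exact hx.1.1
  rw [Finset.card_eq_sum_card_fiberwise hmem]
  have hfib : ∀ i ∈ Rs, (F.filter fun x => x.1 = i).card ≤ m := by
    intro i _
    set G := F.filter fun x => x.1 = i with hG
    have h1 : (↑G : Set (ℕ × ℕ)).encard ≤ {j | (i, j) ∈ Q}.encard := by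
      apply Set.encard_le_encard_of_injOn (f := Prod.snd)
      · intro x hx
        simp only [hG, hF, Finset.coe_filter, Set.mem_setOf_eq, Finset.mem_filter] at hx
        obtain ⟨⟨_, hxQ⟩, hx1⟩ := hx
        have : x = (i, x.2) := by rw [← hx1]
        rw [this] at hxQ
        exact hxQ
      · intro x hx y hy hxy
        simp only [hG, hF, Finset.coe_filter, Set.mem_setOf_eq, Finset.mem_filter] at hx hy
        exact Prod.ext (hx.2.trans hy.2.symm) hxy
    rw [Set.encard_coe_eq_coe_finsetCard] at h1
    exact_mod_cast h1.trans (hQ i)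
  calc ∑ i ∈ Rs, (F.filter fun x => x.1 = i).card ≤ ∑ _i ∈ Rs, m :=
        Finset.sum_le_sum hfib
    _ = m * Rs.card := by rw [Finset.sum_const, smul_eq_mul, mul_comm]

theorem stmt_3 (P : Set (ℕ × ℕ)) (m n : ℕ) :
    (∃ Q R : Set (ℕ × ℕ), P = Q ∪ R ∧
      (∀ i, {j | (i, j) ∈ Q}.encard ≤ m) ∧
      (∀ j, {i | (i, j) ∈ R}.encard ≤ n)) ↔
    (∀ R C : Finset ℕ,
      (P ∩ (↑R ×ˢ ↑C)).ncard ≤ m * R.card + n * C.card) := by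
  classical
  constructor
  · rintro ⟨Q, R, rfl, hQ, hR⟩ Rs Cs
    have hset : (Q ∪ R) ∩ (↑Rs ×ˢ ↑Cs) =
        ↑(((Rs ×ˢ Cs).filter (· ∈ Q)) ∪ ((Rs ×ˢ Cs).filter (· ∈ R))) := by
      ext x
      simp only [Finset.coe_union, Finset.coe_filter, Set.mem_union, Set.mem_inter_iff,
        Set.mem_prod, Finset.mem_product, Set.mem_setOf_eq, Finset.mem_coe]
      tauto
    rw [hset, Set.ncard_coe_finset]
    calc (((Rs ×ˢ Cs).filter (· ∈ Q)) ∪ ((Rs ×ˢ Cs).filter (· ∈ R))).card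
        ≤ ((Rs ×ˢ Cs).filter (· ∈ Q)).card + ((Rs ×ˢ Cs).filter (· ∈ R)).card :=
          Finset.card_union_le _ _
      _ ≤ m * Rs.card + n * Cs.card := by
          gcongr
          · exact aux_row_bound hQ Rs Cs
          · have hR' : ∀ j, {i | (j, i) ∈ Prod.swap ⁻¹' R}.encard ≤ n := by
              intro j; simpa using hR j
            have hmain := aux_row_bound (Q := Prod.swap ⁻¹' R) hR' Cs Rs
            have hcard : ((Rs ×ˢ Cs).filter (· ∈ R)).card
                = ((Cs ×ˢ Rs).filter (· ∈ Prod.swap ⁻¹' R)).card := by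
              apply Finset.card_bij (fun x _ => Prod.swap x)
              · intro x hx
                simp only [Finset.mem_filter, Finset.mem_product] at hx ⊢
                exact ⟨⟨hx.1.2, hx.1.1⟩, by simpa using hx.2⟩
              · intro x _ y _ hxy
                exact Prod.swap_injective hxy
              · intro y hy
                refine ⟨Prod.swap y, ?_, by simp⟩
                simp only [Finset.mem_filter, Finset.mem_product] at hy ⊢
                exact ⟨⟨hy.1.2, hy.1.1⟩, by simpa using hy.2⟩
            rw [hcard]; exact hmain
  · intro h
    let t : P → Finset ((ℕ × Fin m) ⊕ (ℕ × Fin n)) := fun e =>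
      (Finset.univ.image fun k : Fin m => Sum.inl ((e : ℕ × ℕ).1, k)) ∪
      (Finset.univ.image fun k : Fin n => Sum.inr ((e : ℕ × ℕ).2, k))
    have hall : ∀ s : Finset P, s.card ≤ (s.biUnion t).card := by
      intro s
      set Rs := s.image fun e : ↥P => (e : ℕ × ℕ).1 with hRs
      set Cs := s.image fun e : ↥P => (e : ℕ × ℕ).2 with hCs
      have hbU : s.card ≤ m * Rs.card + n * Cs.card := by
        have hinj : s.card = (s.image Subtype.val).card :=
          (Finset.card_image_of_injective s Subtype.val_injective).symm
        have hsubP : ↑(s.image Subtype.val) ⊆ P ∩ (↑Rs ×ˢ ↑Cs) := by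
          rintro x hx
          simp only [Finset.coe_image, Set.mem_image, Finset.mem_coe] at hx
          obtain ⟨e, he, rfl⟩ := hx
          exact ⟨e.2, Finset.mem_coe.2 (Finset.mem_image.2 ⟨e, he, rfl⟩),
            Finset.mem_coe.2 (Finset.mem_image.2 ⟨e, he, rfl⟩)⟩
        have hfin : (P ∩ (↑Rs ×ˢ ↑Cs)).Finite := by
          apply Set.Finite.subset _ Set.inter_subset_right
          rw [← Finset.coe_product]
          exact (Rs ×ˢ Cs).finite_toSet
        calc s.card = (s.image Subtype.val).card := hinj
          _ = (↑(s.image Subtype.val) : Set (ℕ × ℕ)).ncard := (Set.ncard_coe_finset _).symm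
          _ ≤ (P ∩ (↑Rs ×ˢ ↑Cs)).ncard := Set.ncard_le_ncard hsubP hfin
          _ ≤ m * Rs.card + n * Cs.card := h Rs Cs
      refine hbU.trans ?_
      have hsub2 : ((Rs ×ˢ (Finset.univ : Finset (Fin m))).map ⟨Sum.inl, Sum.inl_injective⟩) ∪
          ((Cs ×ˢ (Finset.univ : Finset (Fin n))).map ⟨Sum.inr, Sum.inr_injective⟩)
          ⊆ s.biUnion t := by
        intro x hx
        rw [Finset.mem_union] at hx
        rcases hx with hx | hx
        · rw [Finset.mem_map] at hx
          obtain ⟨⟨i, k⟩, hik, rfl⟩ := hx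
          rw [Finset.mem_product] at hik
          obtain ⟨e, he, rfl⟩ := Finset.mem_image.1 hik.1
          refine Finset.mem_biUnion.2 ⟨e, he, ?_⟩
          exact Finset.mem_union_left _ (Finset.mem_image.2 ⟨k, Finset.mem_univ k, rfl⟩)
        · rw [Finset.mem_map] at hx
          obtain ⟨⟨j, k⟩, hjk, rfl⟩ := hx
          rw [Finset.mem_product] at hjk
          obtain ⟨e, he, rfl⟩ := Finset.mem_image.1 hjk.1
          refine Finset.mem_biUnion.2 ⟨e, he, ?_⟩
          exact Finset.mem_union_right _ (Finset.mem_image.2 ⟨k, Finset.mem_univ k, rfl⟩)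
      have hdisj : Disjoint
          ((Rs ×ˢ (Finset.univ : Finset (Fin m))).map ⟨Sum.inl, Sum.inl_injective⟩)
          ((Cs ×ˢ (Finset.univ : Finset (Fin n))).map ⟨Sum.inr, Sum.inr_injective⟩) := by
        simp only [Finset.disjoint_left, Finset.mem_map, Function.Embedding.coeFn_mk]
        rintro x ⟨a, _, rfl⟩ ⟨b, _, hb⟩
        exact Sum.inl_ne_inr hb.symm
      calc m * Rs.card + n * Cs.card
          = (((Rs ×ˢ (Finset.univ : Finset (Fin m))).map ⟨Sum.inl, Sum.inl_injective⟩) ∪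
            ((Cs ×ˢ (Finset.univ : Finset (Fin n))).map ⟨Sum.inr, Sum.inr_injective⟩)).card := by
            rw [Finset.card_union_of_disjoint hdisj]
            simp [Finset.card_map, Finset.card_product, mul_comm]
        _ ≤ (s.biUnion t).card := Finset.card_le_card hsub2
    obtain ⟨f, hfinj, hft⟩ := (Finset.all_card_le_biUnion_card_iff_exists_injective t).1 hall
    have hchar : ∀ e : P, (∃ k, f e = Sum.inl ((e : ℕ × ℕ).1, k)) ∨
        (∃ k, f e = Sum.inr ((e : ℕ × ℕ).2, k)) := by
      intro e
      have hmem := hft e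
      simp only [t, Finset.mem_union, Finset.mem_image, Finset.mem_univ, true_and] at hmem
      obtain ⟨k, hk⟩ | ⟨k, hk⟩ := hmem
      · exact Or.inl ⟨k, hk.symm⟩
      · exact Or.inr ⟨k, hk.symm⟩
    refine ⟨{p | ∃ hp : p ∈ P, ∃ k, f ⟨p, hp⟩ = Sum.inl (p.1, k)},
            {p | ∃ hp : p ∈ P, ∃ k, f ⟨p, hp⟩ = Sum.inr (p.2, k)}, ?_, ?_, ?_⟩
    · ext p
      simp only [Set.mem_union, Set.mem_setOf_eq]
      constructor
      · intro hp
        obtain h1 | h1 := hchar ⟨p, hp⟩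
        · exact Or.inl ⟨hp, h1⟩
        · exact Or.inr ⟨hp, h1⟩
      · rintro (⟨hp, _⟩ | ⟨hp, _⟩) <;> exact hp
    · intro i
      rcases isEmpty_or_nonempty (Fin m) with hm | hm
      · have hempty :
            {j | (i, j) ∈ {p | ∃ hp : p ∈ P, ∃ k, f ⟨p, hp⟩ = Sum.inl (p.1, k)}} = ∅ := by
          ext j
          simp only [Set.mem_setOf_eq, Set.mem_empty_iff_false, iff_false, not_exists]
          intro _ k
          exact hm.elim k
        rw [hempty]
        simp
      · have : Inhabited (Fin m) := Classical.inhabited_of_nonempty hm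
        have hle := aux_encard_le_of_injOn (β := Fin m)
          (s := {j | (i, j) ∈ {p | ∃ hp : p ∈ P, ∃ k, f ⟨p, hp⟩ = Sum.inl (p.1, k)}})
          (fun j => if h : ∃ hp : (i, j) ∈ P, ∃ k, f ⟨(i, j), hp⟩ = Sum.inl (i, k)
            then h.choose_spec.choose else default) ?_
        · simpa using hle
        · intro j1 hj1' j2 hj2' heq
          have hj1 : ∃ hp : (i, j1) ∈ P, ∃ k, f ⟨(i, j1), hp⟩ = Sum.inl (i, k) := hj1'
          have hj2 : ∃ hp : (i, j2) ∈ P, ∃ k, f ⟨(i, j2), hp⟩ = Sum.inl (i, k) := hj2'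
          simp only [dif_pos hj1, dif_pos hj2] at heq
          have e1 := hj1.choose_spec.choose_spec
          have e2 := hj2.choose_spec.choose_spec
          rw [heq] at e1
          have hf := e1.trans e2.symm
          have := hfinj hf
          exact (Prod.ext_iff.1 (Subtype.ext_iff.1 this)).2
    · intro j
      rcases isEmpty_or_nonempty (Fin n) with hn | hn
      · have hempty :
            {i | (i, j) ∈ {p | ∃ hp : p ∈ P, ∃ k, f ⟨p, hp⟩ = Sum.inr (p.2, k)}} = ∅ := by
          ext i
          simp only [Set.mem_setOf_eq, Set.mem_empty_iff_false, iff_false, not_exists]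
          intro _ k
          exact hn.elim k
        rw [hempty]
        simp
      · have : Inhabited (Fin n) := Classical.inhabited_of_nonempty hn
        have hle := aux_encard_le_of_injOn (β := Fin n)
          (s := {i | (i, j) ∈ {p | ∃ hp : p ∈ P, ∃ k, f ⟨p, hp⟩ = Sum.inr (p.2, k)}})
          (fun i => if h : ∃ hp : (i, j) ∈ P, ∃ k, f ⟨(i, j), hp⟩ = Sum.inr (j, k)
            then h.choose_spec.choose else default) ?_
        · simpa using hle
        · intro i1 hi1' i2 hi2' heq
          have hi1 : ∃ hp : (i1, j) ∈ P, ∃ k, f ⟨(i1, j), hp⟩ = Sum.inr (j, k) := hi1'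
          have hi2 : ∃ hp : (i2, j) ∈ P, ∃ k, f ⟨(i2, j), hp⟩ = Sum.inr (j, k) := hi2'
          simp only [dif_pos hi1, dif_pos hi2] at heq
          have e1 := hi1.choose_spec.choose_spec
          have e2 := hi2.choose_spec.choose_spec
          rw [heq] at e1
          have hf := e1.trans e2.symm
          have := hfinj hf
          exact (Prod.ext_iff.1 (Subtype.ext_iff.1 this)).1
end

section
/- For S ⊆ ℕ, the Hankel pattern H(S) = {(i,j) : i+j ∈ S} is the union of a row finite set and a column finite set if and only if sup_{k≥0} |S ∩ (2^{k-1}, 2^k]| < ∞. -/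
open scoped ENNReal ComplexOrder

/-- Helper: a finset injecting (via `f`) into a set of `encard ≤ k` has card `≤ k`. -/
lemma proj_card_le {α β : Type*} [DecidableEq β] (F : Finset α) (f : α → β)
    (s : Set β) (k : ℕ) (hs : s.encard ≤ k) (h1 : ∀ p ∈ F, f p ∈ s)
    (h2 : Set.InjOn f F) : F.card ≤ k := by
  have hcard : (F.image f).card = F.card := Finset.card_image_of_injOn h2
  have himg : ((F.image f : Finset β) : Set β) ⊆ s := by
    intro x hx
    simp only [Finset.coe_image, Set.mem_image, Finset.mem_coe] at hx
    obtain ⟨p, hp, rfl⟩ := hx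
    exact h1 p hp
  have h3 : ((F.image f).card : ℕ∞) ≤ k := by
    rw [← Set.encard_coe_eq_coe_finsetCard]
    exact le_trans (Set.encard_mono himg) hs
  rw [hcard] at h3
  exact_mod_cast h3

/-- Helper: dyadic bounds give bounds on intervals [n, 2n]. -/
lemma icc_encard_le (S : Set ℕ) (L : ℕ)
    (h : ∀ u : ℕ, (S ∩ Set.Ioc (2 ^ u / 2) (2 ^ u)).encard ≤ L)
    (n : ℕ) (hn : 1 ≤ n) : (S ∩ Set.Icc n (2 * n)).encard ≤ 3 * L := by
  set t := Nat.log 2 n with ht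
  have h1 : 2 ^ t ≤ n := Nat.pow_log_le_self 2 (by omega)
  have h2 : n < 2 ^ (t + 1) := Nat.lt_pow_succ_log_self (by norm_num) n
  have e1 : (2 : ℕ) ^ (t + 1) = 2 * 2 ^ t := by ring
  have e2 : (2 : ℕ) ^ (t + 2) = 2 * 2 ^ (t + 1) := by ring
  have hp : 1 ≤ (2 : ℕ) ^ t := Nat.one_le_two_pow
  have hsub : S ∩ Set.Icc n (2 * n) ⊆
      (S ∩ Set.Ioc (2 ^ t / 2) (2 ^ t) ∪ S ∩ Set.Ioc (2 ^ (t+1) / 2) (2 ^ (t+1))) ∪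
        S ∩ Set.Ioc (2 ^ (t+2) / 2) (2 ^ (t+2)) := by
    rintro x ⟨hxS, hx1, hx2⟩
    rcases le_or_gt x (2 ^ t) with hc | hc
    · exact Or.inl (Or.inl ⟨hxS, by omega, hc⟩)
    · rcases le_or_gt x (2 ^ (t + 1)) with hc' | hc'
      · exact Or.inl (Or.inr ⟨hxS, by omega, hc'⟩)
      · exact Or.inr ⟨hxS, by omega, by omega⟩
  calc (S ∩ Set.Icc n (2 * n)).encard ≤ _ := Set.encard_mono hsub
    _ ≤ (S ∩ Set.Ioc (2 ^ t / 2) (2 ^ t) ∪ S ∩ Set.Ioc (2 ^ (t+1) / 2) (2 ^ (t+1))).encard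
        + (S ∩ Set.Ioc (2 ^ (t+2) / 2) (2 ^ (t+2))).encard := Set.encard_union_le _ _
    _ ≤ ((S ∩ Set.Ioc (2 ^ t / 2) (2 ^ t)).encard
        + (S ∩ Set.Ioc (2 ^ (t+1) / 2) (2 ^ (t+1))).encard)
        + (S ∩ Set.Ioc (2 ^ (t+2) / 2) (2 ^ (t+2))).encard := by
      gcongr
      exact Set.encard_union_le _ _
    _ ≤ (L + L) + L := by gcongr <;> exact h _
    _ = ((3 * L : ℕ) : ℕ∞) := by push_cast; ring

theorem stmt_9 (S : Set ℕ) :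
    (∃ (Q R : Set (ℕ × ℕ)) (k : ℕ), {p : ℕ × ℕ | p.1 + p.2 ∈ S} = Q ∪ R ∧
      (∀ i, {j | (i, j) ∈ Q}.encard ≤ k) ∧
      (∀ j, {i | (i, j) ∈ R}.encard ≤ k)) ↔
    (∃ L : ℕ, ∀ k : ℕ, (S ∩ Set.Ioc (2 ^ k / 2) (2 ^ k)).encard ≤ L) := by
  classical
  constructor
  · rintro ⟨Q, R, k, hQR, hQ, hR⟩
    refine ⟨3 * k, fun t => ?_⟩
    by_contra hc
    push_neg at hc
    have hle : ((3 * k + 1 : ℕ) : ℕ∞) ≤ (S ∩ Set.Ioc (2 ^ t / 2) (2 ^ t)).encard := by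
      have := Order.add_one_le_of_lt hc
      exact_mod_cast this
    obtain ⟨A, hAsub, hAcard⟩ := Set.exists_subset_encard_eq hle
    have hAfin : A.Finite := Set.finite_of_encard_eq_coe hAcard
    set m := 2 ^ t / 2 with hm
    set M := 2 ^ t with hM
    have hMm : M ≤ 2 * m + 2 := by omega
    have hmem : ∀ a ∈ A, a ∈ S ∧ m < a ∧ a ≤ M := fun a ha => by
      obtain ⟨h1, h2, h3⟩ := hAsub ha; exact ⟨h1, h2, h3⟩
    set F := hAfin.toFinset with hF
    have hFcard : F.card = 3 * k + 1 := by
      have := hAfin.encard_eq_coe_toFinset_card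
      rw [hAcard] at this
      exact_mod_cast this.symm
    have hFmem : ∀ a ∈ F, a ∈ S ∧ m < a ∧ a ≤ M := fun a ha =>
      hmem a (hAfin.mem_toFinset.mp ha)
    set T : Finset (ℕ × ℕ) :=
      (Finset.range (m + 1) ×ˢ F).image (fun p => (p.1, p.2 - p.1)) with hT
    have hinj : Set.InjOn (fun p : ℕ × ℕ => (p.1, p.2 - p.1))
        ((Finset.range (m + 1) ×ˢ F : Finset (ℕ × ℕ)) : Set (ℕ × ℕ)) := by
      rintro ⟨i, s⟩ hp ⟨i', s'⟩ hq he
      simp only [Finset.coe_product, Set.mem_prod, Finset.mem_coe, Finset.mem_range] at hp hq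
      have hs : m < s := (hFmem s hp.2).2.1
      have hs' : m < s' := (hFmem s' hq.2).2.1
      simp only [Prod.mk.injEq] at he
      have : i = i' := he.1
      subst this
      have : s = s' := by omega
      simp [this]
    have hTcard : T.card = (m + 1) * (3 * k + 1) := by
      rw [hT, Finset.card_image_of_injOn hinj, Finset.card_product, Finset.card_range, hFcard]
    have hTmem : ∀ p ∈ T, p.1 ≤ m ∧ 1 ≤ p.2 ∧ p.2 ≤ M ∧ p.1 + p.2 ∈ S := by
      rintro ⟨i, j⟩ hpT
      simp only [hT, Finset.mem_image, Finset.mem_product, Finset.mem_range] at hpT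
      obtain ⟨⟨i', s⟩, ⟨hi', hsF⟩, he⟩ := hpT
      obtain ⟨hsS, hs1, hs2⟩ := hFmem s hsF
      simp only [Prod.mk.injEq] at he
      obtain ⟨he1, he2⟩ := he
      refine ⟨by omega, by omega, by omega, ?_⟩
      have hij : i + j = s := by omega
      show i + j ∈ S
      rw [hij]; exact hsS
    -- split T into Q-part and R-part
    have hsplit : (T.filter (· ∈ Q)).card + (T.filter (· ∉ Q)).card = T.card :=
      Finset.card_filter_add_card_filter_not _
    have hQbound : (T.filter (· ∈ Q)).card ≤ k * (m + 1) := by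
      have := Finset.card_le_mul_card_image_of_maps_to
        (f := Prod.fst) (s := T.filter (· ∈ Q)) (t := Finset.range (m + 1))
        (fun p hp => by
          simp only [Finset.mem_filter] at hp
          exact Finset.mem_range.mpr (by have := (hTmem p hp.1).1; omega))
        k
        (fun i _hi => by
          apply proj_card_le _ Prod.snd {j | (i, j) ∈ Q} k (hQ i)
          · rintro ⟨i', j⟩ hp
            simp only [Finset.mem_filter] at hp
            obtain ⟨⟨hpT, hpQ⟩, hfst⟩ := hp
            obtain rfl : i' = i := hfst
            exact hpQ
          · rintro ⟨i1, j1⟩ hp ⟨i2, j2⟩ hq he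
            simp only [Finset.coe_filter, Set.mem_setOf_eq, Finset.mem_filter] at hp hq
            have he' : j1 = j2 := he
            have hi' : i1 = i2 := by rw [hp.2, hq.2]
            simp [he', hi'])
      simpa [Finset.card_range] using this
    have hRsub : ∀ p ∈ T.filter (· ∉ Q), p ∈ R := by
      intro p hp
      simp only [Finset.mem_filter] at hp
      have hpH : p ∈ {q : ℕ × ℕ | q.1 + q.2 ∈ S} := (hTmem p hp.1).2.2.2
      rw [hQR] at hpH
      rcases hpH with h | h
      · exact absurd h hp.2
      · exact h
    have hRbound : (T.filter (· ∉ Q)).card ≤ k * M := by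
      have := Finset.card_le_mul_card_image_of_maps_to
        (f := Prod.snd) (s := T.filter (· ∉ Q)) (t := Finset.Icc 1 M)
        (fun p hp => by
          simp only [Finset.mem_filter] at hp
          have := hTmem p hp.1
          exact Finset.mem_Icc.mpr ⟨this.2.1, this.2.2.1⟩)
        k
        (fun j _hj => by
          apply proj_card_le _ Prod.fst {i | (i, j) ∈ R} k (hR j)
          · rintro ⟨i, j'⟩ hp
            simp only [Finset.mem_filter] at hp
            obtain ⟨hpTQ, hsnd⟩ := hp
            obtain rfl : j' = j := hsnd
            exact hRsub _ (Finset.mem_filter.mpr hpTQ)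
          · rintro ⟨i1, j1⟩ hp ⟨i2, j2⟩ hq he
            simp only [Finset.coe_filter, Set.mem_setOf_eq, Finset.mem_filter] at hp hq
            have he' : i1 = i2 := he
            have hj' : j1 = j2 := by rw [hp.2, hq.2]
            simp [he', hj'])
      simpa [Nat.card_Icc] using this
    have hfinal : (m + 1) * (3 * k + 1) ≤ k * (m + 1) + k * M := by
      rw [← hTcard, ← hsplit]
      omega
    have : (m + 1) * (3 * k + 1) ≤ (m + 1) * (3 * k) := by
      calc (m + 1) * (3 * k + 1) ≤ k * (m + 1) + k * M := hfinal
        _ ≤ k * (m + 1) + k * (2 * m + 2) := by gcongr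
        _ = (m + 1) * (3 * k) := by ring
    have := Nat.le_of_mul_le_mul_left this (by omega : 0 < m + 1)
    omega
  · rintro ⟨L, hL⟩
    refine ⟨{p | p.1 + p.2 ∈ S ∧ p.2 ≤ p.1}, {p | p.1 + p.2 ∈ S ∧ p.1 < p.2}, 3 * L + 1,
      ?_, ?_, ?_⟩
    · ext p
      simp only [Set.mem_setOf_eq, Set.mem_union]
      constructor
      · intro h
        rcases le_or_gt p.2 p.1 with hc | hc
        · exact Or.inl ⟨h, hc⟩
        · exact Or.inr ⟨h, hc⟩
      · rintro (⟨h, _⟩ | ⟨h, _⟩) <;> exact h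
    · intro i
      have hset : {j | (i, j) ∈ {p : ℕ × ℕ | p.1 + p.2 ∈ S ∧ p.2 ≤ p.1}}
          = {j | i + j ∈ S ∧ j ≤ i} := rfl
      rw [hset]
      rcases Nat.eq_zero_or_pos i with rfl | hi
      · have : {j | 0 + j ∈ S ∧ j ≤ 0} ⊆ {0} := by
          intro j hj
          simp only [Set.mem_setOf_eq] at hj
          simp [Nat.le_zero.mp hj.2]
        calc {j | 0 + j ∈ S ∧ j ≤ 0}.encard ≤ ({0} : Set ℕ).encard := Set.encard_mono this
          _ = 1 := Set.encard_singleton 0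
          _ ≤ ((3 * L + 1 : ℕ) : ℕ∞) := by
            have : (1 : ℕ) ≤ 3 * L + 1 := by omega
            exact_mod_cast this
      · have hinj : Set.InjOn (fun j => i + j) {j | i + j ∈ S ∧ j ≤ i} := by
          intro a _ b _ h
          have h' : i + a = i + b := h
          omega
        have himg : (fun j => i + j) '' {j | i + j ∈ S ∧ j ≤ i} ⊆ S ∩ Set.Icc i (2 * i) := by
          rintro x ⟨j, ⟨hjS, hji⟩, hx⟩
          obtain rfl : i + j = x := hx
          exact ⟨hjS, by omega, by omega⟩
        calc {j | i + j ∈ S ∧ j ≤ i}.encard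
            = ((fun j => i + j) '' {j | i + j ∈ S ∧ j ≤ i}).encard :=
              (hinj.encard_image).symm
          _ ≤ (S ∩ Set.Icc i (2 * i)).encard := Set.encard_mono himg
          _ ≤ ((3 * L : ℕ) : ℕ∞) := icc_encard_le S L hL i hi
          _ ≤ ((3 * L + 1 : ℕ) : ℕ∞) := by exact_mod_cast Nat.le_succ _
    · intro j
      have hset : {i | (i, j) ∈ {p : ℕ × ℕ | p.1 + p.2 ∈ S ∧ p.1 < p.2}}
          = {i | i + j ∈ S ∧ i < j} := rfl
      rw [hset]
      rcases Nat.eq_zero_or_pos j with rfl | hj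
      · have : {i | i + 0 ∈ S ∧ i < 0} = ∅ := by
          ext i; simp
        rw [this]
        simp
      · have hinj : Set.InjOn (fun i => i + j) {i | i + j ∈ S ∧ i < j} := by
          intro a _ b _ h
          have h' : a + j = b + j := h
          omega
        have himg : (fun i => i + j) '' {i | i + j ∈ S ∧ i < j} ⊆ S ∩ Set.Icc j (2 * j) := by
          rintro x ⟨i, ⟨hiS, hij⟩, hx⟩
          obtain rfl : i + j = x := hx
          exact ⟨hiS, by omega, by omega⟩
        calc {i | i + j ∈ S ∧ i < j}.encard
            = ((fun i => i + j) '' {i | i + j ∈ S ∧ i < j}).encard :=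
              (hinj.encard_image).symm
          _ ≤ (S ∩ Set.Icc j (2 * j)).encard := Set.encard_mono himg
          _ ≤ ((3 * L : ℕ) : ℕ∞) := icc_encard_le S L hL j hj
          _ ≤ ((3 * L + 1 : ℕ) : ℕ∞) := by exact_mod_cast Nat.le_succ _
end

section
/- A set S ⊆ ℕ satisfies sup_{k≥0} |S ∩ (2^{k-1}, 2^k]| < ∞ if and only if S is a finite union of lacunary sets. -/
open scoped ENNReal ComplexOrder

def Lacunary (T : Set ℕ) : Prop :=
  ∃ q : ℝ, 1 < q ∧ ∀ a ∈ T, ∀ b ∈ T, a < b → q * a < b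

section AuxStmt10
open Set

/-- Chain lemma: in a set with the lacunary growth property, a finite subset's
max is at least q^(card-1) times its min. -/
lemma chain_lemma (q : ℝ) (hq : 1 < q) (T : Set ℕ)
    (hT : ∀ a ∈ T, ∀ b ∈ T, a < b → q * a < b) :
    ∀ m : ℕ, ∀ F : Finset ℕ, F.card = m + 1 → ↑F ⊆ T →
      ∀ (hne : F.Nonempty), q ^ m * (F.min' hne : ℝ) ≤ (F.max' hne : ℝ) := by
  intro m
  induction m with
  | zero =>
    intro F hcard hsub hne
    simp only [pow_zero, one_mul]
    exact_mod_cast F.min'_le _ (F.max'_mem hne)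
  | succ m ih =>
    intro F hcard hsub hne
    set b := F.max' hne with hb
    set F' := F.erase b with hF'
    have hbF : b ∈ F := F.max'_mem hne
    have hcard' : F'.card = m + 1 := by
      rw [hF', Finset.card_erase_of_mem hbF]; omega
    have hne' : F'.Nonempty := Finset.card_pos.mp (by omega)
    have hsub' : ↑F' ⊆ T := fun x hx => hsub (Finset.erase_subset _ _ hx)
    have hmax' : F'.max' hne' ∈ F' := F'.max'_mem hne'
    have hmaxlt : F'.max' hne' < b := by
      have h1 : F'.max' hne' ≠ b := (Finset.mem_erase.mp hmax').1
      have h2 : F'.max' hne' ≤ b := F.le_max' _ (Finset.erase_subset _ _ hmax')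
      omega
    have hstep : q * (F'.max' hne' : ℝ) < (b : ℝ) :=
      hT _ (hsub' hmax') _ (hsub hbF) hmaxlt
    have hih := ih F' hcard' hsub' hne'
    have hminle : (F.min' hne : ℝ) ≤ (F'.min' hne' : ℝ) := by
      exact_mod_cast F.min'_le _ (Finset.erase_subset _ _ (F'.min'_mem hne'))
    have hq0 : (0:ℝ) ≤ q := le_of_lt (lt_trans one_pos hq)
    calc q ^ (m+1) * (F.min' hne : ℝ) ≤ q ^ (m+1) * (F'.min' hne' : ℝ) := by
          apply mul_le_mul_of_nonneg_left hminle (pow_nonneg hq0 _)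
      _ = q * (q ^ m * (F'.min' hne' : ℝ)) := by ring
      _ ≤ q * (F'.max' hne' : ℝ) := by
          apply mul_le_mul_of_nonneg_left hih hq0
      _ ≤ (b : ℝ) := le_of_lt hstep

/-- A lacunary set meets each interval (N, 2N+1] in a bounded number of points. -/
lemma lacunary_interval_bound (T : Set ℕ) (hT : Lacunary T) :
    ∃ C : ℕ, ∀ N : ℕ, (T ∩ Set.Ioc N (2 * N + 1)).encard ≤ C := by
  obtain ⟨q, hq, hlt⟩ := hT
  obtain ⟨C, hC⟩ := pow_unbounded_of_one_lt (2:ℝ) hq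
  refine ⟨C, fun N => ?_⟩
  set A := T ∩ Set.Ioc N (2 * N + 1) with hA
  have hfin : A.Finite := (Set.finite_Iic (2 * N + 1)).subset
    (fun x hx => (hx.2.2 : x ≤ 2 * N + 1))
  rw [Set.encard_le_coe_iff_finite_ncard_le]
  refine ⟨hfin, ?_⟩
  set F := hfin.toFinset with hF
  have hncard : A.ncard = F.card := Set.ncard_eq_toFinset_card A hfin
  rw [hncard]
  by_contra hcon
  push_neg at hcon
  have hne : F.Nonempty := Finset.card_pos.mp (by omega)
  have hsub : ↑F ⊆ T := by
    intro x hx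
    exact ((hfin.mem_toFinset).mp hx).1
  obtain ⟨m, hm⟩ : ∃ m, F.card = m + 1 := ⟨F.card - 1, by have := Finset.card_pos.mpr hne; omega⟩
  have hchain := chain_lemma q hq T hlt m F hm hsub hne
  have hminmem : F.min' hne ∈ A := (hfin.mem_toFinset).mp (F.min'_mem hne)
  have hmaxmem : F.max' hne ∈ A := (hfin.mem_toFinset).mp (F.max'_mem hne)
  have hmin : N + 1 ≤ F.min' hne := hminmem.2.1
  have hmax : F.max' hne ≤ 2 * N + 1 := hmaxmem.2.2
  -- max < 2 * min
  have hlt2 : (F.max' hne : ℝ) < 2 * (F.min' hne : ℝ) := by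
    have : (F.max' hne : ℕ) < 2 * F.min' hne := by omega
    exact_mod_cast this
  have hminpos : (0:ℝ) < (F.min' hne : ℝ) := by
    have : 0 < F.min' hne := by omega
    exact_mod_cast this
  have hqm : q ^ m < 2 := by
    have := lt_of_le_of_lt hchain hlt2
    exact lt_of_mul_lt_mul_right this hminpos.le
  have : m < C := (pow_lt_pow_iff_right₀ hq).mp (lt_trans hqm hC)
  omega

lemma encard_iUnion_fin_le {n : ℕ} (A : Fin n → Set ℕ) :
    (⋃ i, A i).encard ≤ ∑ i, (A i).encard := by
  induction n with
  | zero => simp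
  | succ n ih =>
    rw [Fin.sum_univ_succ]
    have h : (⋃ i, A i) = A 0 ∪ ⋃ i : Fin n, A i.succ := by
      ext x; simp [Fin.exists_fin_succ]
    rw [h]
    exact le_trans (Set.encard_union_le _ _) (by gcongr; exact ih _)

/-- Block membership: every s ≥ 1 lies in the dyadic block indexed by clog 2 s. -/
lemma mem_own_block {s : ℕ} (hs : 1 ≤ s) :
    s ∈ Set.Ioc (2 ^ (Nat.clog 2 s) / 2) (2 ^ (Nat.clog 2 s)) := by
  constructor
  · rcases eq_or_lt_of_le hs with h | h
    · simp [← h, Nat.clog_one_right]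
    · have h2 : 2 ≤ s := h
      have hpos : 0 < Nat.clog 2 s := Nat.clog_pos (by norm_num) h2
      have hlt : 2 ^ (Nat.clog 2 s - 1) < s := Nat.pow_pred_clog_lt_self (by norm_num) h
      have hdiv : 2 ^ (Nat.clog 2 s) / 2 = 2 ^ (Nat.clog 2 s - 1) := by
        conv_lhs => rw [show Nat.clog 2 s = (Nat.clog 2 s - 1) + 1 by omega]
        rw [pow_succ]
        exact Nat.mul_div_cancel _ (by norm_num)
      omega
  · exact Nat.le_pow_clog (by norm_num) s

noncomputable def rnk (S : Set ℕ) (s : ℕ) : ℕ :=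
  (S ∩ Set.Ioc (2 ^ (Nat.clog 2 s) / 2) (2 ^ (Nat.clog 2 s)) ∩ Set.Iio s).ncard

noncomputable def clr (S : Set ℕ) (L s : ℕ) : ℕ :=
  if s = 0 then 2 * L else rnk S s + L * (Nat.clog 2 s % 2)

lemma blockSet_finite (S : Set ℕ) {L : ℕ}
    (hL : ∀ k : ℕ, (S ∩ Set.Ioc (2 ^ k / 2) (2 ^ k)).encard ≤ L) (k : ℕ) :
    (S ∩ Set.Ioc (2 ^ k / 2) (2 ^ k)).Finite :=
  Set.finite_of_encard_le_coe (hL k)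

lemma rnk_lt (S : Set ℕ) {L : ℕ}
    (hL : ∀ k : ℕ, (S ∩ Set.Ioc (2 ^ k / 2) (2 ^ k)).encard ≤ L)
    {s : ℕ} (hs : s ∈ S) (h1 : 1 ≤ s) : rnk S s < L := by
  set k := Nat.clog 2 s with hk
  have hmem : s ∈ S ∩ Set.Ioc (2 ^ k / 2) (2 ^ k) := ⟨hs, mem_own_block h1⟩
  have hfin := blockSet_finite S hL k
  have hss : S ∩ Set.Ioc (2 ^ k / 2) (2 ^ k) ∩ Set.Iio s ⊂
      S ∩ Set.Ioc (2 ^ k / 2) (2 ^ k) := by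
    constructor
    · exact Set.inter_subset_left
    · intro hsub
      exact absurd (hsub hmem).2 (lt_irrefl s)
  have h1' := Set.ncard_lt_ncard hss hfin
  have h2' : (S ∩ Set.Ioc (2 ^ k / 2) (2 ^ k)).ncard ≤ L :=
    ((Set.encard_le_coe_iff_finite_ncard_le).mp (hL k)).2
  exact lt_of_lt_of_le h1' h2'

lemma rnk_lt_rnk (S : Set ℕ) {L : ℕ}
    (hL : ∀ k : ℕ, (S ∩ Set.Ioc (2 ^ k / 2) (2 ^ k)).encard ≤ L)
    {a b : ℕ} (ha : a ∈ S) (h1 : 1 ≤ a) (hab : a < b)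
    (hcl : Nat.clog 2 a = Nat.clog 2 b) : rnk S a < rnk S b := by
  set k := Nat.clog 2 b with hk
  have hmema : a ∈ S ∩ Set.Ioc (2 ^ k / 2) (2 ^ k) := by
    refine ⟨ha, ?_⟩
    rw [← hcl]
    exact mem_own_block h1
  have hfin : (S ∩ Set.Ioc (2 ^ k / 2) (2 ^ k) ∩ Set.Iio b).Finite :=
    (blockSet_finite S hL k).subset Set.inter_subset_left
  have hss : S ∩ Set.Ioc (2 ^ k / 2) (2 ^ k) ∩ Set.Iio a ⊂
      S ∩ Set.Ioc (2 ^ k / 2) (2 ^ k) ∩ Set.Iio b := by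
    constructor
    · exact Set.inter_subset_inter_right _ (Set.Iio_subset_Iio (le_of_lt hab))
    · intro hsub
      have := (hsub ⟨hmema, hab⟩).2
      exact absurd this (lt_irrefl a)
  have := Set.ncard_lt_ncard hss hfin
  unfold rnk
  rw [hcl]
  exact this

end AuxStmt10

theorem stmt_10 (S : Set ℕ) :
    (∃ L : ℕ, ∀ k : ℕ, (S ∩ Set.Ioc (2 ^ k / 2) (2 ^ k)).encard ≤ L) ↔
    (∃ (n : ℕ) (T : Fin n → Set ℕ), (∀ i, Lacunary (T i)) ∧ S = ⋃ i, T i) := by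
  constructor
  · rintro ⟨L, hL⟩
    have hclr_lt : ∀ s ∈ S, clr S L s < 2 * L + 1 := by
      intro s hs
      unfold clr
      by_cases h0 : s = 0
      · simp [h0]
      · simp only [h0, if_false]
        have h1 : rnk S s < L := rnk_lt S hL hs (by omega)
        have h2 : Nat.clog 2 s % 2 ≤ 1 := by omega
        have h3 : L * (Nat.clog 2 s % 2) ≤ L * 1 := Nat.mul_le_mul_left L h2
        omega
    refine ⟨2 * L + 1, fun i => {s | s ∈ S ∧ clr S L s = i.val}, ?_, ?_⟩
    · intro i
      refine ⟨2, one_lt_two, ?_⟩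
      rintro a ⟨haS, hca⟩ b ⟨hbS, hcb⟩ hab
      by_cases ha0 : a = 0
      · subst ha0
        have : (0:ℝ) < b := by exact_mod_cast hab
        simpa using this
      · have ha1 : 1 ≤ a := by omega
        have hb1 : 1 ≤ b := by omega
        have heq : clr S L a = clr S L b := by rw [hca, hcb]
        have hb0 : b ≠ 0 := by omega
        unfold clr at heq
        simp only [ha0, hb0, if_false] at heq
        have hra : rnk S a < L := rnk_lt S hL haS ha1
        have hrb : rnk S b < L := rnk_lt S hL hbS hb1
        have hpar : Nat.clog 2 a % 2 = Nat.clog 2 b % 2 ∧ rnk S a = rnk S b := by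
          rcases Nat.mod_two_eq_zero_or_one (Nat.clog 2 a) with h1 | h1 <;>
            rcases Nat.mod_two_eq_zero_or_one (Nat.clog 2 b) with h2 | h2 <;>
            rw [h1, h2] at heq ⊢ <;> simp at heq ⊢ <;> omega
        have hcle : Nat.clog 2 a ≤ Nat.clog 2 b := Nat.clog_mono_right _ (le_of_lt hab)
        rcases eq_or_lt_of_le hcle with hceq | hclt
        · exact absurd hpar.2 (ne_of_lt (rnk_lt_rnk S hL haS ha1 hab hceq))
        · have hgap : Nat.clog 2 a + 2 ≤ Nat.clog 2 b := by
            have := hpar.1; omega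
          have hbmem := mem_own_block hb1
          have hamem := mem_own_block ha1
          have hclb1 : 1 ≤ Nat.clog 2 b := by omega
          have hdiv : 2 ^ (Nat.clog 2 b) / 2 = 2 ^ (Nat.clog 2 b - 1) := by
            conv_lhs => rw [show Nat.clog 2 b = (Nat.clog 2 b - 1) + 1 by omega]
            rw [pow_succ]
            exact Nat.mul_div_cancel _ (by norm_num)
          have h2a : 2 * a ≤ 2 ^ (Nat.clog 2 a + 1) := by
            have := hamem.2
            rw [pow_succ]
            omega
          have hple : 2 ^ (Nat.clog 2 a + 1) ≤ 2 ^ (Nat.clog 2 b - 1) :=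
            Nat.pow_le_pow_right (by norm_num) (by omega)
          have hfin : 2 * a < b := by
            have hlb := hbmem.1
            rw [hdiv] at hlb
            omega
          exact_mod_cast hfin
    · ext s
      simp only [Set.mem_iUnion, Set.mem_setOf_eq]
      constructor
      · intro hs
        exact ⟨⟨clr S L s, hclr_lt s hs⟩, hs, rfl⟩
      · rintro ⟨i, hs, -⟩
        exact hs
  · rintro ⟨n, T, hlac, rfl⟩
    choose C hC using fun i => lacunary_interval_bound (T i) (hlac i)
    refine ⟨∑ i, C i, fun k => ?_⟩
    set N := 2 ^ k / 2 with hN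
    have hsub : (⋃ i, T i) ∩ Set.Ioc N (2 ^ k) ⊆ ⋃ i, (T i ∩ Set.Ioc N (2 * N + 1)) := by
      rintro x ⟨hx, hx2⟩
      obtain ⟨i, hi⟩ := Set.mem_iUnion.mp hx
      refine Set.mem_iUnion.mpr ⟨i, hi, hx2.1, ?_⟩
      have h2k : 2 ^ k ≤ 2 * N + 1 := by
        rw [hN]; omega
      exact le_trans hx2.2 h2k
    calc ((⋃ i, T i) ∩ Set.Ioc N (2 ^ k)).encard
        ≤ (⋃ i, T i ∩ Set.Ioc N (2 * N + 1)).encard := Set.encard_le_encard hsub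
      _ ≤ ∑ i, (T i ∩ Set.Ioc N (2 * N + 1)).encard := encard_iUnion_fin_le _
      _ ≤ ∑ i : Fin n, ((C i : ℕ∞)) := Finset.sum_le_sum fun i _ => hC i N
      _ = ((∑ i, C i : ℕ) : ℕ∞) := by push_cast; rfl
end

section
/- If T is a self-adjoint n×n matrix, then its Schur multiplier norm satisfies ‖T‖_m ≤ max_i ⟨|T| e_i, e_i⟩. -/
open scoped ENNReal ComplexOrder

open scoped MatrixOrder in
private lemma matAbs_eq' {n : ℕ} (T A : Matrix (Fin n) (Fin n) ℂ) (hA : A.PosSemidef)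
    (h : A ^ 2 = T.conjTranspose * T) : matAbs T = A := by
  have h1 : matAbs T = cfc Real.sqrt (T.conjTranspose * T) := by
    rw [(Matrix.posSemidef_conjTranspose_mul_self T).1.cfc_eq]
    rfl
  rw [h1, ← cfcₙ_eq_cfc (hf0 := Real.sqrt_zero),
    ← CFC.sqrt_eq_real_sqrt _ (Matrix.posSemidef_conjTranspose_mul_self T).nonneg]
  rw [CFC.sqrt_eq_iff _ _ (Matrix.posSemidef_conjTranspose_mul_self T).nonneg hA.nonneg, ← sq]
  exact h

private lemma coord' {n : ℕ} (B : Matrix (Fin n) (Fin n) ℂ) (w : EuclideanSpace ℂ (Fin n))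
    (i : Fin n) : (Matrix.toEuclideanCLM (𝕜 := ℂ) B w) i = ∑ j, B i j * w j := by
  show B.mulVec w i = _
  simp [Matrix.mulVec, dotProduct]

private lemma swap3' {n : ℕ} (f : Fin n → Fin n → Fin n → ℂ) :
    ∑ i, ∑ j, ∑ k, f i j k = ∑ k, ∑ i, ∑ j, f i j k := by
  rw [show (∑ i, ∑ j, ∑ k, f i j k) = ∑ i, ∑ k, ∑ j, f i j k from
    Finset.sum_congr rfl fun i _ => Finset.sum_comm, Finset.sum_comm]

private lemma schur_key {n : ℕ} (M X S : Matrix (Fin n) (Fin n) ℂ) (ε : Fin n → ℂ)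
    (hε : ∀ k, ‖ε k‖ ≤ 1)
    (hM : ∀ i j, M i j = ∑ k, S i k * ε k * (starRingEnd ℂ) (S j k))
    (c : ℝ) (hc : 0 ≤ c) (hS : ∀ i, ∑ k, ‖S i k‖ ^ 2 ≤ c)
    (hX : ‖Matrix.toEuclideanCLM (𝕜 := ℂ) X‖ ≤ 1) :
    ‖Matrix.toEuclideanCLM (𝕜 := ℂ) (M.hadamard X)‖ ≤ c := by
  set Φ := Matrix.toEuclideanCLM (𝕜 := ℂ) (M.hadamard X) with hΦ
  set Ψ := Matrix.toEuclideanCLM (𝕜 := ℂ) X with hΨ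
  have key : ∀ u v : EuclideanSpace ℂ (Fin n), ‖(inner ℂ u (Φ v) : ℂ)‖ ≤ c * (‖u‖ * ‖v‖) := by
    intro u v
    set uk : Fin n → EuclideanSpace ℂ (Fin n) :=
      fun k => (WithLp.equiv 2 _).symm (fun i => u i * (starRingEnd ℂ) (S i k)) with huk
    set vk : Fin n → EuclideanSpace ℂ (Fin n) :=
      fun k => (WithLp.equiv 2 _).symm (fun j => v j * (starRingEnd ℂ) (S j k)) with hvk
    have hukap : ∀ k i, uk k i = u i * (starRingEnd ℂ) (S i k) := by intro k i; rfl
    have hvkap : ∀ k j, vk k j = v j * (starRingEnd ℂ) (S j k) := by intro k j; rfl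
    have step1 : (inner ℂ u (Φ v) : ℂ) = ∑ k, ε k * inner ℂ (uk k) (Ψ (vk k)) := by
      calc (inner ℂ u (Φ v) : ℂ)
          = ∑ i, ∑ j, ∑ k, (starRingEnd ℂ) (u i) * (S i k * ε k * (starRingEnd ℂ) (S j k))
              * (X i j * v j) := by
            simp only [PiLp.inner_apply, RCLike.inner_apply, hΦ, coord', Matrix.hadamard_apply,
              hM, Finset.sum_mul, Finset.mul_sum]
            exact Finset.sum_congr rfl fun i _ => Finset.sum_congr rfl fun j _ =>
              Finset.sum_congr rfl fun k _ => by ring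
        _ = ∑ k, ε k * inner ℂ (uk k) (Ψ (vk k)) := by
            rw [swap3']
            refine Finset.sum_congr rfl fun k _ => ?_
            simp only [PiLp.inner_apply, RCLike.inner_apply, hΨ, coord', hukap, hvkap,
              Finset.mul_sum, Finset.sum_mul, map_mul, Complex.conj_conj]
            exact Finset.sum_congr rfl fun i _ => Finset.sum_congr rfl fun j _ => by ring
    have normuk : ∀ (w : EuclideanSpace ℂ (Fin n)) (wk : Fin n → EuclideanSpace ℂ (Fin n)),
        (∀ k i, wk k i = w i * (starRingEnd ℂ) (S i k)) →
        ∑ k, ‖wk k‖ ^ 2 ≤ c * ‖w‖ ^ 2 := by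
      intro w wk hw
      have h1 : ∀ k, ‖wk k‖ ^ 2 = ∑ i, ‖w i‖ ^ 2 * ‖S i k‖ ^ 2 := by
        intro k
        rw [EuclideanSpace.norm_eq, Real.sq_sqrt (by positivity)]
        refine Finset.sum_congr rfl fun i _ => ?_
        rw [hw k i, norm_mul, RCLike.norm_conj, mul_pow]
      calc ∑ k, ‖wk k‖ ^ 2 = ∑ i, ‖w i‖ ^ 2 * ∑ k, ‖S i k‖ ^ 2 := by
            simp only [h1]; rw [Finset.sum_comm]
            exact Finset.sum_congr rfl fun i _ => (Finset.mul_sum _ _ _).symm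
        _ ≤ ∑ i, ‖w i‖ ^ 2 * c :=
            Finset.sum_le_sum fun i _ => mul_le_mul_of_nonneg_left (hS i) (by positivity)
        _ = c * ‖w‖ ^ 2 := by
            rw [EuclideanSpace.norm_eq, Real.sq_sqrt (by positivity), ← Finset.sum_mul, mul_comm]
    have step2 : ‖(inner ℂ u (Φ v) : ℂ)‖ ≤ ∑ k, ‖uk k‖ * ‖vk k‖ := by
      rw [step1]
      refine (norm_sum_le _ _).trans (Finset.sum_le_sum fun k _ => ?_)
      rw [norm_mul]
      have h2 : ‖Ψ (vk k)‖ ≤ ‖vk k‖ := by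
        calc ‖Ψ (vk k)‖ ≤ ‖Ψ‖ * ‖vk k‖ := Ψ.le_opNorm _
          _ ≤ 1 * ‖vk k‖ := mul_le_mul_of_nonneg_right hX (norm_nonneg _)
          _ = ‖vk k‖ := one_mul _
      have h1 : ‖(inner ℂ (uk k) (Ψ (vk k)) : ℂ)‖ ≤ ‖uk k‖ * ‖vk k‖ :=
        (norm_inner_le_norm _ _).trans (mul_le_mul_of_nonneg_left h2 (norm_nonneg _))
      calc ‖ε k‖ * ‖(inner ℂ (uk k) (Ψ (vk k)) : ℂ)‖ ≤ 1 * (‖uk k‖ * ‖vk k‖) :=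
            mul_le_mul (hε k) h1 (norm_nonneg _) zero_le_one
        _ = _ := one_mul _
    calc ‖(inner ℂ u (Φ v) : ℂ)‖ ≤ ∑ k, ‖uk k‖ * ‖vk k‖ := step2
      _ ≤ Real.sqrt (∑ k, ‖uk k‖ ^ 2) * Real.sqrt (∑ k, ‖vk k‖ ^ 2) :=
          Real.sum_mul_le_sqrt_mul_sqrt _ _ _
      _ ≤ Real.sqrt (c * ‖u‖ ^ 2) * Real.sqrt (c * ‖v‖ ^ 2) :=
          mul_le_mul (Real.sqrt_le_sqrt (normuk u uk hukap))
            (Real.sqrt_le_sqrt (normuk v vk hvkap)) (Real.sqrt_nonneg _) (Real.sqrt_nonneg _)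
      _ = c * (‖u‖ * ‖v‖) := by
          rw [Real.sqrt_mul hc, Real.sqrt_mul hc, Real.sqrt_sq (norm_nonneg _),
            Real.sqrt_sq (norm_nonneg _)]
          calc Real.sqrt c * ‖u‖ * (Real.sqrt c * ‖v‖)
              = Real.sqrt c * Real.sqrt c * (‖u‖ * ‖v‖) := by ring
            _ = c * (‖u‖ * ‖v‖) := by rw [Real.mul_self_sqrt hc]
  refine ContinuousLinearMap.opNorm_le_bound _ hc fun v => ?_
  rcases eq_or_lt_of_le (norm_nonneg (Φ v)) with h0 | h0
  · rw [← h0]; positivity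
  · have hk := key (Φ v) v
    rw [inner_self_eq_norm_sq_to_K, norm_pow, RCLike.norm_ofReal, abs_norm] at hk
    have h2 : ‖Φ v‖ * ‖Φ v‖ ≤ (c * ‖v‖) * ‖Φ v‖ := by nlinarith
    exact le_of_mul_le_mul_right h2 h0

theorem stmt_13 {n : ℕ} (T : Matrix (Fin n) (Fin n) ℂ) (hT : T.IsHermitian) :
    schurNorm T ≤ ⨆ i, (matAbs T i i).re := by
  classical
  set c := ⨆ i, (matAbs T i i).re with hcdef
  set V : Matrix (Fin n) (Fin n) ℂ := (hT.eigenvectorUnitary : Matrix (Fin n) (Fin n) ℂ) with hV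
  set d : Fin n → ℝ := hT.eigenvalues with hd
  set S : Matrix (Fin n) (Fin n) ℂ :=
    Matrix.of (fun i k => V i k * ((Real.sqrt |d k| : ℝ) : ℂ)) with hSdef
  set ε : Fin n → ℂ := fun k => ((Real.sign (d k) : ℝ) : ℂ) with hεdef
  have hVmem := hT.eigenvectorUnitary.2
  have hVV : star V * V = 1 := Matrix.mem_unitaryGroup_iff'.mp hVmem
  have hspec : T = V * Matrix.diagonal (fun k => ((d k : ℝ) : ℂ)) * star V := by
    exact hT.spectral_theorem
  have entry : ∀ (f : Fin n → ℂ) (i j : Fin n),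
      (V * Matrix.diagonal f * star V) i j = ∑ k, V i k * f k * (starRingEnd ℂ) (V j k) := by
    intro f i j
    rw [Matrix.mul_apply]
    refine Finset.sum_congr rfl fun k _ => ?_
    rw [Matrix.mul_diagonal]
    simp [Matrix.star_apply, mul_comm]
  have hsm : ∀ k, Real.sign (d k) * |d k| = d k := by
    intro k
    rcases lt_trichotomy (d k) 0 with h | h | h
    · rw [Real.sign_of_neg h, abs_of_neg h]; ring
    · simp [h, Real.sign_zero]
    · rw [Real.sign_of_pos h, abs_of_pos h]; ring
  have hM : ∀ i j, T i j = ∑ k, S i k * ε k * (starRingEnd ℂ) (S j k) := by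
    intro i j
    rw [hspec, entry]
    refine Finset.sum_congr rfl fun k _ => ?_
    simp only [hSdef, Matrix.of_apply, hεdef, map_mul, Complex.conj_ofReal]
    have hrs : Real.sqrt |d k| * Real.sign (d k) * Real.sqrt |d k| = d k := by
      have h1 : Real.sqrt |d k| * Real.sign (d k) * Real.sqrt |d k|
          = Real.sign (d k) * (Real.sqrt |d k| * Real.sqrt |d k|) := by ring
      rw [h1, Real.mul_self_sqrt (abs_nonneg _), hsm]
    calc V i k * ((d k : ℝ) : ℂ) * (starRingEnd ℂ) (V j k)
        = V i k * (starRingEnd ℂ) (V j k) *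
            ((Real.sqrt |d k| * Real.sign (d k) * Real.sqrt |d k| : ℝ) : ℂ) := by
          rw [hrs]; ring
      _ = V i k * ((Real.sqrt |d k| : ℝ) : ℂ) * ((Real.sign (d k) : ℝ) : ℂ) *
            ((starRingEnd ℂ) (V j k) * ((Real.sqrt |d k| : ℝ) : ℂ)) := by
          push_cast; ring
  have conj_mul : ∀ B C : Matrix (Fin n) (Fin n) ℂ,
      (V * B * star V) * (V * C * star V) = V * (B * C) * star V := by
    intro B C
    calc (V * B * star V) * (V * C * star V)
        = V * B * (star V * V) * C * star V := by simp only [mul_assoc]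
      _ = V * (B * C) * star V := by rw [hVV]; simp only [mul_assoc, mul_one, one_mul]
  set A : Matrix (Fin n) (Fin n) ℂ :=
    V * Matrix.diagonal (fun k => ((|d k| : ℝ) : ℂ)) * star V with hA
  have hApsd : A.PosSemidef := by
    rw [hA, Matrix.star_eq_conjTranspose]
    exact (Matrix.posSemidef_diagonal_iff.mpr fun k =>
      Complex.zero_le_real.mpr (abs_nonneg _)).mul_mul_conjTranspose_same V
  have hAsq : A ^ 2 = T.conjTranspose * T := by
    rw [pow_two, hT.eq, hA, hspec, conj_mul, conj_mul, Matrix.diagonal_mul_diagonal,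
      Matrix.diagonal_mul_diagonal]
    have hfg : (fun k => ((|d k| : ℝ) : ℂ) * ((|d k| : ℝ) : ℂ))
        = (fun k => ((d k : ℝ) : ℂ) * ((d k : ℝ) : ℂ)) :=
      funext fun k => by rw [← Complex.ofReal_mul, ← Complex.ofReal_mul, abs_mul_abs_self]
    show (V * Matrix.diagonal (fun k => ((|d k| : ℝ) : ℂ) * ((|d k| : ℝ) : ℂ))) * star V
        = (V * Matrix.diagonal (fun k => ((d k : ℝ) : ℂ) * ((d k : ℝ) : ℂ))) * star V
    rw [hfg]
  have habs : matAbs T = A :=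
    matAbs_eq' T A hApsd hAsq
  have hdiag : ∀ i, (matAbs T i i).re = ∑ k, ‖S i k‖ ^ 2 := by
    intro i
    rw [habs, hA, entry, Complex.re_sum]
    refine Finset.sum_congr rfl fun k _ => ?_
    have h1 : V i k * ((|d k| : ℝ) : ℂ) * (starRingEnd ℂ) (V i k)
        = ((Complex.normSq (V i k) * |d k| : ℝ) : ℂ) := by
      push_cast
      rw [← Complex.mul_conj]
      ring
    rw [h1, Complex.ofReal_re, hSdef]
    simp only [Matrix.of_apply, norm_mul, mul_pow, Complex.norm_real, Real.norm_eq_abs,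
      abs_of_nonneg (Real.sqrt_nonneg _)]
    rw [Real.sq_sqrt (abs_nonneg _), Complex.normSq_eq_norm_sq]
  have hii : ∀ i, ∑ k, ‖S i k‖ ^ 2 ≤ c := by
    intro i
    rw [← hdiag i, hcdef]
    exact le_ciSup (f := fun i => (matAbs T i i).re)
      (Set.Finite.bddAbove (Set.finite_range _)) i
  have hc0 : 0 ≤ c := by
    rcases isEmpty_or_nonempty (Fin n) with he | ⟨⟨i⟩⟩
    · rw [hcdef, Real.iSup_of_isEmpty]
    · exact le_trans (by positivity : (0 : ℝ) ≤ ∑ k, ‖S i k‖ ^ 2) (hii i)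
  have hε1 : ∀ k, ‖ε k‖ ≤ 1 := by
    intro k
    rw [hεdef]
    simp only [Complex.norm_real, Real.norm_eq_abs]
    rcases Real.sign_apply_eq (d k) with h | h | h <;> rw [h] <;> norm_num
  show (⨆ X : {X : Matrix (Fin n) (Fin n) ℂ // opNorm2 X ≤ 1}, opNorm2 (T.hadamard X.1)) ≤ c
  exact Real.iSup_le (fun X => schur_key T X.1 S ε hε1 hM c hc0 hii X.2) hc0
end

section
/- Let J_n be the n×n all-ones matrix and T = J_n − I (the adjacency matrix of the complete graph). Then the Schur multiplier norm of T equals 2 − 2/n. -/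
open scoped ENNReal ComplexOrder

open scoped Matrix.Norms.L2Operator Matrix

namespace Stmt15
variable {n : ℕ}

/-! ### Roots of unity -/

noncomputable def zeta (n : ℕ) : ℂ := Complex.exp (2 * Real.pi * Complex.I / n)

lemma zeta_prim (hn : 0 < n) : IsPrimitiveRoot (zeta n) n :=
  Complex.isPrimitiveRoot_exp n hn.ne'

lemma zeta_ne_zero : zeta n ≠ 0 := Complex.exp_ne_zero _

lemma star_zeta_mul (hn : 0 < n) : (starRingEnd ℂ) (zeta n) * zeta n = 1 := by
  have h1 : ‖zeta n‖ = 1 := by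
    unfold zeta
    rw [Complex.norm_exp]
    norm_num
  rw [mul_comm, Complex.mul_conj, Complex.normSq_eq_norm_sq, h1]
  norm_num

lemma star_zeta (hn : 0 < n) : (starRingEnd ℂ) (zeta n) = (zeta n)⁻¹ :=
  eq_inv_of_mul_eq_one_left (star_zeta_mul hn)

lemma sum_char (hn : 0 < n) (i j : Fin n) :
    ∑ k ∈ Finset.range n, ((zeta n)⁻¹ ^ (k * i.val) * (zeta n) ^ (k * j.val)) =
      if i = j then (n : ℂ) else 0 := by
  set ζ := zeta n
  have hterm : ∀ k, (ζ⁻¹ ^ (k * i.val) * ζ ^ (k * j.val)) = (ζ⁻¹ ^ i.val * ζ ^ j.val) ^ k := by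
    intro k
    rw [mul_pow, ← pow_mul, ← pow_mul, Nat.mul_comm i.val k, Nat.mul_comm j.val k]
  simp only [hterm]
  set μ := ζ⁻¹ ^ i.val * ζ ^ j.val with hμ
  by_cases h : i = j
  · subst h
    have : μ = 1 := by
      rw [hμ, inv_pow, inv_mul_eq_one₀ (pow_ne_zero _ zeta_ne_zero)]
    simp [this]
  · have hμn : μ ^ n = 1 := by
      rw [hμ, mul_pow, ← pow_mul, ← pow_mul, Nat.mul_comm i.val n, Nat.mul_comm j.val n,
        pow_mul, pow_mul, inv_pow, (zeta_prim hn).pow_eq_one, inv_one, one_pow, one_pow, one_mul]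
    have hμ1 : μ ≠ 1 := by
      intro hc
      apply h
      have : ζ ^ i.val = ζ ^ j.val := by
        rw [hμ, inv_pow, inv_mul_eq_one₀ (pow_ne_zero _ zeta_ne_zero)] at hc
        exact hc
      exact Fin.ext ((zeta_prim hn).pow_inj i.isLt j.isLt this)
    rw [geom_sum_eq hμ1, hμn]
    simp [h]

/-! ### The matrices -/

noncomputable def U (n k : ℕ) : Matrix (Fin n) (Fin n) ℂ :=
  Matrix.diagonal fun j => zeta n ^ (k * j.val)

noncomputable def T (n : ℕ) : Matrix (Fin n) (Fin n) ℂ :=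
  Matrix.of fun i j : Fin n => if i = j then (0 : ℂ) else 1

lemma conj_entry (k : ℕ) (X : Matrix (Fin n) (Fin n) ℂ) (i j : Fin n) :
    ((U n k)ᴴ * X * (U n k)) i j
      = (starRingEnd ℂ) (zeta n ^ (k * i.val)) * X i j * zeta n ^ (k * j.val) := by
  rw [U, Matrix.diagonal_conjTranspose, Matrix.mul_diagonal, Matrix.diagonal_mul]
  rfl

lemma key_identity (hn : 0 < n) (X : Matrix (Fin n) (Fin n) ℂ) :
    (T n).hadamard X
      = ((n : ℂ)⁻¹) • ∑ k ∈ Finset.range n, (X - (U n k)ᴴ * X * (U n k)) := by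
  have hnC : (n : ℂ) ≠ 0 := Nat.cast_ne_zero.mpr hn.ne'
  ext i j
  have hs : (∑ k ∈ Finset.range n, (X - (U n k)ᴴ * X * (U n k))) i j
      = ∑ k ∈ Finset.range n, (X i j - (starRingEnd ℂ) (zeta n ^ (k * i.val)) * X i j
          * zeta n ^ (k * j.val)) := by
    rw [Matrix.sum_apply]
    exact Finset.sum_congr rfl fun k _ => by rw [Matrix.sub_apply, conj_entry]
  rw [Matrix.smul_apply, hs]
  have hstar : ∀ k : ℕ, (starRingEnd ℂ) (zeta n ^ (k * i.val)) = (zeta n)⁻¹ ^ (k * i.val) := by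
    intro k; rw [map_pow, star_zeta hn]
  simp only [hstar]
  rw [Finset.sum_sub_distrib, Finset.sum_const, Finset.card_range]
  have : ∑ k ∈ Finset.range n, (zeta n)⁻¹ ^ (k * i.val) * X i j * zeta n ^ (k * j.val)
      = (∑ k ∈ Finset.range n, (zeta n)⁻¹ ^ (k * i.val) * zeta n ^ (k * j.val)) * X i j := by
    rw [Finset.sum_mul]; exact Finset.sum_congr rfl fun k _ => by ring
  rw [this, sum_char hn i j]
  by_cases h : i = j
  · simp [Matrix.hadamard, T, h, smul_eq_mul]
  · simp [Matrix.hadamard, T, h, smul_eq_mul, hnC]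

/-! ### Norm facts -/

lemma norm_one_mat (hn : 0 < n) : ‖(1 : Matrix (Fin n) (Fin n) ℂ)‖ = 1 := by
  have : Nontrivial (EuclideanSpace ℂ (Fin n)) := by
    haveI : Nonempty (Fin n) := ⟨⟨0, hn⟩⟩
    infer_instance
  rw [Matrix.cstar_norm_def, map_one]
  exact ContinuousLinearMap.norm_id

lemma norm_of_unitary (hn : 0 < n) {A : Matrix (Fin n) (Fin n) ℂ} (h : Aᴴ * A = 1) :
    ‖A‖ = 1 := by
  have h2 : ‖A‖ * ‖A‖ = 1 := by
    rw [← Matrix.l2_opNorm_conjTranspose_mul_self, h, norm_one_mat hn]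
  nlinarith [norm_nonneg A]

lemma U_unitary (hn : 0 < n) (k : ℕ) : (U n k)ᴴ * (U n k) = 1 := by
  have hsz : ∀ m : ℕ, (starRingEnd ℂ) (zeta n ^ m) * zeta n ^ m = 1 := by
    intro m; rw [map_pow, ← mul_pow, star_zeta_mul hn, one_pow]
  ext i j
  rw [U, Matrix.diagonal_conjTranspose, Matrix.diagonal_mul_diagonal]
  by_cases h : i = j
  · subst h
    simp only [Matrix.diagonal_apply_eq, Matrix.one_apply_eq, Pi.star_apply]
    exact hsz _
  · simp [Matrix.diagonal_apply_ne _ h, Matrix.one_apply, h]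

lemma norm_U (hn : 0 < n) (k : ℕ) : ‖U n k‖ = 1 := norm_of_unitary hn (U_unitary hn k)

/-! ### Upper bound -/

lemma upper_bound (hn : 0 < n) (X : Matrix (Fin n) (Fin n) ℂ) (hX : ‖X‖ ≤ 1) :
    ‖(T n).hadamard X‖ ≤ 2 - 2 / n := by
  have hnR : (0:ℝ) < n := Nat.cast_pos.mpr hn
  rw [key_identity hn X, norm_smul]
  have h1 : ‖((n:ℂ)⁻¹)‖ = (n:ℝ)⁻¹ := by
    rw [← Complex.ofReal_natCast, ← Complex.ofReal_inv, Complex.norm_real]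
    exact abs_of_nonneg (by positivity)
  rw [h1]
  have hbound : ‖∑ k ∈ Finset.range n, (X - (U n k)ᴴ * X * (U n k))‖
      ≤ ∑ k ∈ Finset.range n, (if k = 0 then 0 else 2 : ℝ) := by
    refine (norm_sum_le _ _).trans (Finset.sum_le_sum fun k _ => ?_)
    by_cases hk : k = 0
    · subst hk
      have : U n 0 = 1 := by
        rw [U]
        simp [Matrix.diagonal_one]
      simp [this]
    · simp only [hk, if_false]
      refine (norm_sub_le _ _).trans ?_
      have h2 : ‖(U n k)ᴴ * X * (U n k)‖ ≤ 1 := by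
        calc ‖(U n k)ᴴ * X * (U n k)‖ ≤ ‖(U n k)ᴴ * X‖ * ‖U n k‖ := Matrix.l2_opNorm_mul _ _
        _ ≤ ‖(U n k)ᴴ‖ * ‖X‖ * ‖U n k‖ := by
            have := Matrix.l2_opNorm_mul (U n k)ᴴ X
            have hU := norm_nonneg (U n k)
            nlinarith
        _ ≤ 1 := by
            rw [Matrix.l2_opNorm_conjTranspose, norm_U hn]
            nlinarith
      linarith
  have hsum : ∑ k ∈ Finset.range n, (if k = 0 then 0 else 2 : ℝ) = 2 * n - 2 := by
    have : ∀ k ∈ Finset.range n, (if k = 0 then 0 else 2 : ℝ)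
        = 2 - (if k = 0 then 2 else 0) := by
      intro k _; by_cases hk : k = 0 <;> simp [hk]
    rw [Finset.sum_congr rfl this, Finset.sum_sub_distrib, Finset.sum_const,
      Finset.card_range, Finset.sum_ite_eq' (Finset.range n) 0 (fun _ => (2:ℝ))]
    simp [Finset.mem_range.mpr hn]
    ring
  calc (n:ℝ)⁻¹ * ‖∑ k ∈ Finset.range n, (X - (U n k)ᴴ * X * (U n k))‖
      ≤ (n:ℝ)⁻¹ * (2 * n - 2) := by
        apply mul_le_mul_of_nonneg_left _ (by positivity)
        rw [← hsum]; exact hbound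
    _ = 2 - 2 / n := by field_simp

/-! ### Lower bound -/

noncomputable def J (n : ℕ) : Matrix (Fin n) (Fin n) ℂ := Matrix.of fun _ _ => 1

noncomputable def X0 (n : ℕ) : Matrix (Fin n) (Fin n) ℂ := 1 - ((2 : ℂ) / n) • J n

lemma J_mul_J : J n * J n = (n : ℂ) • J n := by
  ext i j
  simp [J, Matrix.mul_apply]

lemma X0_conjTranspose : (X0 n)ᴴ = X0 n := by
  ext i j
  rcases eq_or_ne i j with h | h
  · subst h; simp [X0, J, Matrix.conjTranspose_apply, Matrix.one_apply, star_div₀]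
  · simp [X0, J, Matrix.conjTranspose_apply, Matrix.one_apply, h, h.symm, star_div₀]

lemma X0_unitary (hn : 0 < n) : (X0 n)ᴴ * X0 n = 1 := by
  have hnC : (n : ℂ) ≠ 0 := Nat.cast_ne_zero.mpr hn.ne'
  rw [X0_conjTranspose, X0]
  set c : ℂ := (2 : ℂ) / n with hc
  have expand : (1 - c • J n) * (1 - c • J n)
      = 1 - c • J n - c • J n + (c * c) • (J n * J n) := by
    simp only [sub_mul, mul_sub, one_mul, mul_one, Matrix.smul_mul, Matrix.mul_smul, smul_smul]
    abel
  rw [expand, J_mul_J, smul_smul]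
  have : c * c * n = c + c := by
    rw [hc]; field_simp; ring
  rw [this, add_smul]
  abel

lemma hadamard_X0 : (T n).hadamard (X0 n) = (-(2 / n) : ℂ) • T n := by
  ext i j
  by_cases h : i = j <;>
    simp [Matrix.hadamard, T, X0, J, h, Matrix.one_apply, sub_eq_add_neg]

lemma norm_X0 (hn : 0 < n) : ‖X0 n‖ = 1 := norm_of_unitary hn (X0_unitary hn)

lemma lower_bound (hn : 0 < n) : (2 - 2 / n : ℝ) ≤ ‖(T n).hadamard (X0 n)‖ := by
  rw [hadamard_X0]
  set M : Matrix (Fin n) (Fin n) ℂ := (-(2 / n) : ℂ) • T n with hM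
  set v : EuclideanSpace ℂ (Fin n) := (WithLp.equiv 2 _).symm (fun _ => (1 : ℂ)) with hv
  have hmv : M *ᵥ (fun _ => (1 : ℂ)) = fun _ => (-(2 / n) : ℂ) * (n - 1) := by
    funext i
    rw [hM, Matrix.smul_mulVec]
    have : T n *ᵥ (fun _ => (1 : ℂ)) = fun _ => ((n : ℂ) - 1) := by
      funext i
      simp only [Matrix.mulVec, dotProduct, mul_one, T, Matrix.of_apply]
      have hterm : ∀ x : Fin n, (if i = x then (0:ℂ) else 1)
          = 1 - (if i = x then 1 else 0) := by
        intro x; by_cases h : i = x <;> simp [h]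
      simp only [hterm]
      rw [Finset.sum_sub_distrib, Finset.sum_const, Finset.card_univ, Finset.sum_ite_eq]
      simp
    rw [this]
    simp
  have happ : Matrix.toEuclideanCLM (𝕜 := ℂ) M v = ((-(2 / n) : ℂ) * (n - 1)) • v := by
    rw [hv, WithLp.equiv_symm_apply, Matrix.toEuclideanCLM_toLp, hmv]
    rw [← WithLp.toLp_smul]
    congr 1
    funext x
    simp
  have hvnorm : 0 < ‖v‖ := by
    have : v ≠ 0 := by
      intro hc
      have := congrFun (congrArg (WithLp.equiv 2 (Fin n → ℂ)) hc) ⟨0, hn⟩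
      simp [hv] at this
    exact norm_pos_iff.mpr this
  have hle := (Matrix.toEuclideanCLM (𝕜 := ℂ) M).le_opNorm v
  rw [happ, norm_smul] at hle
  have hM2 : ‖((-(2 / n) : ℂ) * (n - 1))‖ ≤ ‖Matrix.toEuclideanCLM (𝕜 := ℂ) M‖ :=
    le_of_mul_le_mul_right hle hvnorm
  have hnR0 : (0:ℝ) < n := Nat.cast_pos.mpr hn
  have h2 : (2 : ℝ) / n ≤ 2 := by
    have : (1:ℝ) ≤ n := by exact_mod_cast hn
    rw [div_le_iff₀ (by linarith)]
    nlinarith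
  have hval : ‖((-(2 / n) : ℂ) * (n - 1))‖ = 2 - 2 / n := by
    have hnC : (n:ℂ) ≠ 0 := Nat.cast_ne_zero.mpr hn.ne'
    have h1 : ((-(2 / n) : ℂ) * (n - 1)) = (((2 : ℝ) / n - 2 : ℝ) : ℂ) := by
      push_cast
      field_simp
      ring
    rw [h1, Complex.norm_real, Real.norm_eq_abs, abs_of_nonpos (by linarith)]
    ring
  rw [← hval]
  exact hM2

end Stmt15

theorem stmt_15 {n : ℕ} (hn : 0 < n) :
    schurNorm (Matrix.of fun i j : Fin n => if i = j then (0 : ℂ) else 1) =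
      2 - 2 / n := by
  have hTeq : (Matrix.of fun i j : Fin n => if i = j then (0 : ℂ) else 1) = Stmt15.T n := rfl
  rw [hTeq, schurNorm]
  haveI : Nonempty {X : Matrix (Fin n) (Fin n) ℂ // opNorm2 X ≤ 1} :=
    ⟨⟨0, by unfold opNorm2; rw [map_zero, norm_zero]; norm_num⟩⟩
  have hub : ∀ X : {X : Matrix (Fin n) (Fin n) ℂ // opNorm2 X ≤ 1},
      opNorm2 ((Stmt15.T n).hadamard X.1) ≤ 2 - 2 / n := fun X =>
    Stmt15.upper_bound hn X.1 X.2
  apply le_antisymm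
  · exact ciSup_le hub
  · have hbdd : BddAbove (Set.range fun X : {X : Matrix (Fin n) (Fin n) ℂ // opNorm2 X ≤ 1} =>
        opNorm2 ((Stmt15.T n).hadamard X.1)) := by
      refine ⟨2 - 2 / n, ?_⟩
      rintro _ ⟨X, rfl⟩
      exact hub X
    exact le_ciSup_of_le hbdd ⟨Stmt15.X0 n, le_of_eq (Stmt15.norm_X0 hn)⟩ (Stmt15.lower_bound hn)
end
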